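/- Let D be a field of characteristic 2 and let f, g : D → D be additive maps satisfying f(x) + x^2 * g(x⁻¹) = 0 for every nonzero x ∈ D. Then f = g, and consequently f(a^2 * b) = a^2 * f(b) for all a, b ∈ D. -/

import Mathlib

theorem stmt11 (D : Type*) [Field D] (hchar : ringChar D = 2)
    (f g : D → D)
    (hf : ∀ x y : D, f (x + y) = f x + f y)
    (hg : ∀ x y : D, g (x + y) = g x + g y)
    (hid : ∀ x : D, x ≠ 0 → f x + x ^ 2 * g x⁻¹ = 0) :
    f = g ∧ ∀ a b : D, f (a ^ 2 * b) = a ^ 2 * f b := by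
  haveI : CharP D 2 := hchar ▸ ringChar.charP D
  have h2 : (2 : D) = 0 := by exact_mod_cast CharP.cast_eq_zero D 2
  have f0 : f 0 = 0 := by have h := hf 0 0; rw [add_zero] at h; linear_combination -h
  have g0 : g 0 = 0 := by have h := hg 0 0; rw [add_zero] at h; linear_combination -h
  have hfg : ∀ x : D, x ≠ 0 → f x = x ^ 2 * g x⁻¹ := by
    intro x hx
    linear_combination hid x hx - x ^ 2 * g x⁻¹ * h2
  have hgf : ∀ x : D, x ≠ 0 → g x = x ^ 2 * f x⁻¹ := by
    intro x hx
    have h := hfg x⁻¹ (inv_ne_zero hx)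
    rw [inv_inv] at h
    rw [h, inv_pow]
    field_simp
  -- key identity
  have key : ∀ a t : D, a ≠ 0 → t ≠ 0 → a ≠ t → t ^ 2 * f (a ^ 2 * t⁻¹) = a ^ 2 * f t := by
    intro a t ha ht hat
    have hs : a + t ≠ 0 := by
      intro h
      exact hat (by linear_combination h - t * h2)
    have hu : a * (a + t) * t⁻¹ ≠ 0 := by
      exact mul_ne_zero (mul_ne_zero ha hs) (inv_ne_zero ht)
    have hinv : (a * (a + t) * t⁻¹)⁻¹ = a⁻¹ + (a + t)⁻¹ := by
      field_simp
      linear_combination -a * h2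
    have H4 : f (a * (a + t) * t⁻¹) = (a * (a + t) * t⁻¹) ^ 2 * (g a⁻¹ + g (a + t)⁻¹) := by
      rw [hfg _ hu, hinv, hg]
    have H4' : t ^ 2 * f (a * (a + t) * t⁻¹)
        = a ^ 2 * (a + t) ^ 2 * (g a⁻¹ + g (a + t)⁻¹) := by
      have hts : t ^ 2 * (a * (a + t) * t⁻¹) ^ 2 = a ^ 2 * (a + t) ^ 2 := by
        field_simp
      rw [H4, ← mul_assoc, hts]
    have H5 : f (a * (a + t) * t⁻¹) = f (a ^ 2 * t⁻¹) + f a := by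
      have : a * (a + t) * t⁻¹ = a ^ 2 * t⁻¹ + a := by field_simp
      rw [this, hf]
    have E1 : f a = a ^ 2 * g a⁻¹ := hfg a ha
    have E2 : f (a + t) = (a + t) ^ 2 * g (a + t)⁻¹ := hfg _ hs
    have E3 : f (a + t) = f a + f t := hf a t
    linear_combination H4' - t ^ 2 * H5 + (a + t) ^ 2 * E1 + a ^ 2 * E2 - a ^ 2 * E3
      - (a ^ 2 + a * t) * f a * h2
      + (2 * t * a ^ 3 * (g a⁻¹ + g (a + t)⁻¹) + t ^ 2 * a ^ 2 * (g a⁻¹ + g (a + t)⁻¹)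
         - t ^ 2 * f a - a ^ 2 * f t + a ^ 4 * (g a⁻¹ + g (a + t)⁻¹)) * h2
  have feq : f = g := by
    funext x
    rcases eq_or_ne x 0 with rfl | hx
    · rw [f0, g0]
    rcases eq_or_ne x 1 with rfl | hx1
    · have h := hid 1 one_ne_zero
      rw [inv_one] at h
      linear_combination h - g 1 * h2
    · -- x ≠ 0, 1 : use key with a = 1, t = x⁻¹
      have hx' : x⁻¹ ≠ 0 := inv_ne_zero hx
      have h1x : (1 : D) ≠ x⁻¹ := by
        intro h
        exact hx1 (by rw [← inv_inv x, ← h, inv_one])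
      have hk := key 1 x⁻¹ one_ne_zero hx' h1x
      rw [inv_inv, one_pow, one_mul, one_mul] at hk
      -- hk : (x⁻¹)^2 * f x = f x⁻¹
      have hG := hgf x hx
      rw [hG, ← hk, ← mul_assoc]
      field_simp
  have hself : ∀ x : D, x ≠ 0 → f x = x ^ 2 * f x⁻¹ := by
    intro x hx
    have h := hfg x hx
    rwa [← feq] at h
  refine ⟨feq, ?_⟩
  intro a b
  rcases eq_or_ne a 0 with rfl | ha
  · simp [f0]
  rcases eq_or_ne b 0 with rfl | hb
  · simp [f0]
  rcases eq_or_ne (a * b) 1 with hab | hab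
  · have hb' : b = a⁻¹ := eq_inv_of_mul_eq_one_left (by linear_combination hab)
    subst hb'
    have : a ^ 2 * a⁻¹ = a := by field_simp
    rw [this]
    exact hself a ha
  · have hat : a ≠ b⁻¹ := by
      intro h
      apply hab
      rw [h]
      field_simp
    have hk := key a b⁻¹ ha (inv_ne_zero hb) hat
    rw [inv_inv] at hk
    -- hk : (b⁻¹)^2 * f (a^2*b) = a^2 * f b⁻¹
    have hsb := hself b hb
    -- f b = b^2 * f b⁻¹
    have hb2 : (b : D) ^ 2 ≠ 0 := pow_ne_zero 2 hb
    have : b ^ 2 * ((b⁻¹) ^ 2 * f (a ^ 2 * b)) = b ^ 2 * (a ^ 2 * f b⁻¹) := by rw [hk]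
    rw [← mul_assoc, ← mul_pow, mul_inv_cancel₀ hb, one_pow, one_mul] at this
    rw [this]
    linear_combination a ^ 2 * hsb + (b ^ 2 * a ^ 2 * f b⁻¹ - a ^ 2 * f b) * h2
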